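/- The transformation distance d on k-clusterings of a fixed finite data set is a metric: d(C, C') = 0 iff C = C', d is symmetric, and d satisfies the triangle inequality. -/

import Mathlib

variable {X : Type*} [Fintype X] [DecidableEq X] {k : ℕ}

/-- The clustering-difference graph `CDG(c, c'')` (one edge `c x → c'' x` for each
item `x` with `c x ≠ c'' x`) is a single directed cycle: there are `m + 1` distinct
cluster indices `v 0, ..., v m` and the items moved are exactly one per edge
`v i → v (i+1)` (indices mod `m + 1`). -/
def IsCyclicalMove (c c'' : X → Fin k) : Prop :=
  ∃ (m : ℕ) (v : Fin (m + 1) ↪ Fin k)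
    (e : {x : X // c x ≠ c'' x} ≃ Fin (m + 1)),
    ∀ x : {x : X // c x ≠ c'' x}, c x.1 = v (e x) ∧ c'' x.1 = v (e x + 1)

/-- The clustering-difference graph `CDG(c, c'')` is a single directed path: there
are `m + 2` distinct cluster indices `v 0, ..., v (m+1)` and the items moved are
exactly one per edge `v i → v (i+1)`, `0 ≤ i ≤ m`. -/
def IsSequentialMove (c c'' : X → Fin k) : Prop :=
  ∃ (m : ℕ) (v : Fin (m + 2) ↪ Fin k)
    (e : {x : X // c x ≠ c'' x} ≃ Fin (m + 1)),
    ∀ x : {x : X // c x ≠ c'' x}, c x.1 = v (e x).castSucc ∧ c'' x.1 = v (e x).succ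

/-- An elementary move: a cyclical or a sequential move. -/
def IsMove (c c'' : X → Fin k) : Prop :=
  IsCyclicalMove c c'' ∨ IsSequentialMove c c''

/-- The transformation distance: the minimum number of elementary moves needed to
transform `c` into `c'`. -/
noncomputable def transDist (c c' : X → Fin k) : ℕ :=
  sInf {n | ∃ f : ℕ → X → Fin k, f 0 = c ∧ f n = c' ∧ ∀ i < n, IsMove (f i) (f (i + 1))}

/-- The size of cluster `i` in the clustering `c`. -/
def clusterSize (c : X → Fin k) (i : Fin k) : ℕ :=
  (Finset.univ.filter fun x => c x = i).card

/-- The outdegree of vertex `i` in `CDG(c, c')`. -/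
def cdgOutdeg (c c' : X → Fin k) (i : Fin k) : ℕ :=
  (Finset.univ.filter fun x => c x = i ∧ c' x ≠ i).card

/-- The indegree of vertex `i` in `CDG(c, c')`. -/
def cdgIndeg (c c' : X → Fin k) (i : Fin k) : ℕ :=
  (Finset.univ.filter fun x => c' x = i ∧ c x ≠ i).card

/-- The shared degree of vertex `i` in `CDG(c, c')`. -/
def sharedDeg (c c' : X → Fin k) (i : Fin k) : ℕ :=
  min (cdgIndeg c c' i) (cdgOutdeg c c' i)

lemma isMove_symm {c c'' : X → Fin k} (h : IsMove c c'') : IsMove c'' c := by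
  rcases h with ⟨m, v, e, he⟩ | ⟨m, v, e, he⟩
  · left
    refine ⟨m, (Equiv.neg (Fin (m+1))).toEmbedding.trans v,
      ((Equiv.subtypeEquivRight (fun x => ne_comm)).trans e).trans
        ⟨fun i => -i - 1, fun i => -i - 1, fun i => by beta_reduce; rw [neg_sub, sub_neg_eq_add, add_sub_cancel_left],
          fun i => by beta_reduce; rw [neg_sub, sub_neg_eq_add, add_sub_cancel_left]⟩, ?_⟩
    rintro ⟨x, hx⟩
    obtain ⟨h1, h2⟩ := he ⟨x, Ne.symm hx⟩
    constructor
    · show c'' x = v (-(-(e ⟨x, Ne.symm hx⟩) - 1))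
      rw [show -(-(e ⟨x, Ne.symm hx⟩) - 1) = e ⟨x, Ne.symm hx⟩ + 1 by abel]
      exact h2
    · show c x = v (-((-(e ⟨x, Ne.symm hx⟩) - 1) + 1))
      rw [show -((-(e ⟨x, Ne.symm hx⟩) - 1) + 1) = e ⟨x, Ne.symm hx⟩ by abel]
      exact h1
  · right
    refine ⟨m, (Fin.revPerm).toEmbedding.trans v,
      ((Equiv.subtypeEquivRight (fun x => ne_comm)).trans e).trans Fin.revPerm, ?_⟩
    rintro ⟨x, hx⟩
    obtain ⟨h1, h2⟩ := he ⟨x, Ne.symm hx⟩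
    constructor
    · show c'' x = v (Fin.rev (Fin.castSucc (Fin.rev (e ⟨x, Ne.symm hx⟩))))
      rw [Fin.rev_castSucc, Fin.rev_rev]
      exact h2
    · show c x = v (Fin.rev (Fin.succ (Fin.rev (e ⟨x, Ne.symm hx⟩))))
      rw [Fin.rev_succ, Fin.rev_rev]
      exact h1

lemma isMove_update (c : X → Fin k) (x : X) (b : Fin k) (h : c x ≠ b) :
    IsMove c (Function.update c x b) := by
  right
  have hmem : ∀ y, (c y ≠ Function.update c x b y) ↔ y = x := by
    intro y
    by_cases hy : y = x
    · subst hy; simp [h]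
    · simp [Function.update_of_ne hy, hy]
  refine ⟨0, ⟨![c x, b], ?_⟩,
    { toFun := fun _ => 0
      invFun := fun _ => ⟨x, by simp [h]⟩
      left_inv := fun y => Subtype.ext ((hmem y.1).mp y.2).symm
      right_inv := fun i => (Fin.fin_one_eq_zero i).symm }, ?_⟩
  · intro i j hij
    fin_cases i <;> fin_cases j <;> simp_all [h, h.symm]
  · rintro ⟨y, hy⟩
    have hyx : y = x := (hmem y).mp hy
    subst hyx
    simp [h]
    exact ⟨rfl, rfl⟩

def moveSet (c c' : X → Fin k) : Set ℕ :=
  {n | ∃ f : ℕ → X → Fin k, f 0 = c ∧ f n = c' ∧ ∀ i < n, IsMove (f i) (f (i + 1))}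

lemma moveSet_symm {c c' : X → Fin k} {n : ℕ} (h : n ∈ moveSet c c') :
    n ∈ moveSet c' c := by
  obtain ⟨f, h0, hn, hm⟩ := h
  refine ⟨fun i => f (n - i), by simp [hn], by simp [h0], fun i hi => ?_⟩
  have h1 : n - i - 1 + 1 = n - i := by omega
  have := isMove_symm (hm (n - i - 1) (by omega))
  rw [h1] at this
  have h2 : n - (i + 1) = n - i - 1 := by omega
  show IsMove (f (n - i)) (f (n - (i + 1)))
  rw [h2]
  exact this

lemma moveSet_trans {c c' c'' : X → Fin k} {a b : ℕ}
    (ha : a ∈ moveSet c c') (hb : b ∈ moveSet c' c'') : a + b ∈ moveSet c c'' := by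
  obtain ⟨f, hf0, hfa, hfm⟩ := ha
  obtain ⟨g, hg0, hgb, hgm⟩ := hb
  refine ⟨fun i => if i < a then f i else g (i - a), ?_, ?_, fun i hi => ?_⟩
  · by_cases h : 0 < a
    · simp [h, hf0]
    · have ha0 : a = 0 := by omega
      subst ha0
      simp only [Nat.lt_irrefl, if_false, Nat.sub_zero, hg0, ← hfa, hf0]
  · have : ¬ (a + b < a) := by omega
    simp [this, hgb]
  · by_cases h1 : i + 1 < a
    · have h2 : i < a := by omega
      simpa [h1, h2] using hfm i (by omega)
    · by_cases h2 : i < a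
      · have hia : i + 1 = a := by omega
        have := hfm i (by omega)
        rw [hia, hfa, ← hg0] at this
        simpa [h1, h2, hia] using this
      · have h3 : i - a + 1 = i + 1 - a := by omega
        have := hgm (i - a) (by omega)
        rw [h3] at this
        simpa [h1, h2] using this

lemma moveSet_nonempty (c c' : X → Fin k) : (moveSet c c').Nonempty := by
  generalize hn : (Finset.univ.filter fun x => c x ≠ c' x).card = n
  induction n generalizing c with
  | zero =>
    have : c = c' := by
      funext x
      by_contra hx
      have : x ∈ Finset.univ.filter fun x => c x ≠ c' x := by simp [hx]
      rw [Finset.card_eq_zero] at hn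
      simp [hn] at this
    exact ⟨0, fun _ => c', by simp [this], rfl, fun i hi => by omega⟩
  | succ n ih =>
    have hpos : 0 < (Finset.univ.filter fun x => c x ≠ c' x).card := by omega
    obtain ⟨x, hx⟩ := Finset.card_pos.mp hpos
    simp only [Finset.mem_filter, Finset.mem_univ, true_and] at hx
    set c₁ := Function.update c x (c' x) with hc₁
    have hstep : IsMove c c₁ := isMove_update c x (c' x) hx
    have hfilter : (Finset.univ.filter fun y => c₁ y ≠ c' y)
        = (Finset.univ.filter fun y => c y ≠ c' y).erase x := by
      ext y
      by_cases hy : y = x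
      · subst hy; simp [hc₁]
      · simp [hc₁, Function.update_of_ne hy, hy]
    have hcard : (Finset.univ.filter fun y => c₁ y ≠ c' y).card = n := by
      rw [hfilter, Finset.card_erase_of_mem (by simp [hx]), hn]
      omega
    obtain ⟨a, ha⟩ := ih c₁ hcard
    have h1 : (1 : ℕ) ∈ moveSet c c₁ :=
      ⟨fun i => if i = 0 then c else c₁, by simp, by simp, fun i hi => by
        have : i = 0 := by omega
        simp [this, hstep]⟩
    exact ⟨1 + a, moveSet_trans h1 ha⟩

/-- The transformation distance is a metric on `k`-clusterings of a fixed finite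
data set: it vanishes exactly on equal clusterings, is symmetric, and satisfies
the triangle inequality. -/
theorem stmt_16 (c c' c'' : X → Fin k) :
    (transDist c c' = 0 ↔ c = c') ∧
    transDist c c' = transDist c' c ∧
    transDist c c'' ≤ transDist c c' + transDist c' c'' := by
  refine ⟨⟨?_, ?_⟩, ?_, ?_⟩
  · intro h
    have hne := moveSet_nonempty c c'
    have h' : sInf (moveSet c c') = 0 := h
    have h0 : 0 ∈ moveSet c c' := by
      rcases Nat.sInf_eq_zero.mp h' with h0 | hemp
      · exact h0
      · exact absurd hemp (Set.nonempty_iff_ne_empty.mp hne)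
    obtain ⟨f, hf0, hfn, _⟩ := h0
    rw [← hf0, hfn]
  · rintro rfl
    have h0 : 0 ∈ moveSet c c := ⟨fun _ => c, rfl, rfl, fun i hi => by omega⟩
    exact Nat.sInf_eq_zero.mpr (Or.inl h0)
  · have heq : moveSet c c' = moveSet c' c :=
      Set.Subset.antisymm (fun n h => moveSet_symm h) (fun n h => moveSet_symm h)
    show sInf (moveSet c c') = sInf (moveSet c' c)
    rw [heq]
  · show sInf (moveSet c c'') ≤ sInf (moveSet c c') + sInf (moveSet c' c'')
    exact Nat.sInf_le (moveSet_trans (Nat.sInf_mem (moveSet_nonempty c c'))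
      (Nat.sInf_mem (moveSet_nonempty c' c'')))
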